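/- Analytic core of Lemma 6.3 (growth of the L² distance E): Let K > 0, C₂ ≥ 0, C₉ > 0 and λ₀ ≥ 0. Set C'₁₀ := (3/2)C₂ + (1/2)C₉ and C₁₀ := C₉ e^{3C'₁₀} / (2C'₁₀). Let E : [λ₀,∞) → [0,∞) be locally Lipschitz with E(λ₀) = 0 such that at almost every λ ≥ λ₀ at which E is differentiable, E'(λ) ≤ K² (1 + (3/2) C₂ e^{−(2/3)K²λ}) E(λ) + C₉ K^{1/2} e^{K²λ/6} sqrt(E(λ)). Then for all λ ≥ λ₀: E(λ) ≤ (C₁₀ / K³) e^{−(2/3)K²λ₀} e^{K²λ}. -/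

import Mathlib

open Set MeasureTheory intervalIntegral Filter Topology

private lemma seq_tendsto_nhdsNe (x : ℝ) :
    Tendsto (fun n : ℕ => x + 1/(n+1)) atTop (𝓝[≠] x) := by
  apply tendsto_nhdsWithin_of_tendsto_nhds_of_eventually_within
  · have : Tendsto (fun n : ℕ => (1:ℝ)/(n+1)) atTop (𝓝 0) :=
      tendsto_one_div_add_atTop_nhds_zero_nat
    simpa using tendsto_const_nhds.add this
  · filter_upwards with n
    have hp : (0:ℝ) < 1/(n+1) := by positivity
    simp only [mem_compl_iff, mem_singleton_iff]
    intro h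
    nlinarith [h]

private lemma lipschitz_deriv_bound {C : NNReal} {g : ℝ → ℝ} (hg : LipschitzWith C g) (x : ℝ) :
    |deriv g x| ≤ C := by
  have h := norm_fderiv_le_of_lipschitz ℝ hg (x₀ := x)
  have h1 : deriv g x = fderiv ℝ g x 1 := rfl
  calc |deriv g x| = ‖fderiv ℝ g x 1‖ := by rw [h1]; rfl
    _ ≤ ‖fderiv ℝ g x‖ * ‖(1:ℝ)‖ := (fderiv ℝ g x).le_opNorm 1
    _ ≤ C := by simpa using h

private lemma lipschitz_ftc {C : NNReal} {g : ℝ → ℝ} (hg : LipschitzWith C g) {a b : ℝ}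
    (hab : a ≤ b) : g b - g a = ∫ t in a..b, deriv g t := by
  have hgc : Continuous g := hg.continuous
  set h : ℕ → ℝ := fun n => 1/(n+1) with hh
  have hpos : ∀ n : ℕ, 0 < h n := fun n => by positivity
  set F : ℕ → ℝ → ℝ := fun n x => (g (x + h n) - g x) / h n with hF
  set G : ℝ → ℝ := fun u => ∫ t in a..u, g t with hG
  -- derivative of the primitive
  have hGd : ∀ u : ℝ, HasDerivAt G (g u) u := fun u =>
    (hgc.integral_hasStrictDerivAt a u).hasDerivAt
  -- convergence of integrals of difference quotients to g b - g a
  have key : ∀ u : ℝ, Tendsto (fun n => slope G u (u + h n)) atTop (𝓝 (g u)) := by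
    intro u
    exact (hasDerivAt_iff_tendsto_slope.1 (hGd u)).comp (seq_tendsto_nhdsNe u)
  have hint : ∀ (c d : ℝ), IntervalIntegrable g volume c d :=
    fun c d => hgc.intervalIntegrable c d
  have hFn_int : ∀ n, ∫ x in Ioc a b, F n x = slope G b (b + h n) - slope G a (a + h n) := by
    intro n
    have h1 : ∫ x in Ioc a b, F n x = ∫ x in a..b, F n x :=
      (intervalIntegral.integral_of_le hab).symm
    have h2 : ∫ x in a..b, F n x
        = (h n)⁻¹ * ((∫ x in a..b, g (x + h n)) - ∫ x in a..b, g x) := by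
      have hc1 : Continuous fun x : ℝ => g (x + h n) := by fun_prop
      rw [← intervalIntegral.integral_sub (hc1.intervalIntegrable a b) (hint a b),
        ← intervalIntegral.integral_const_mul]
      congr 1 with x
      simp only [hF]
      ring
    have h3 : (∫ x in a..b, g (x + h n)) = ∫ x in (a + h n)..(b + h n), g x :=
      intervalIntegral.integral_comp_add_right g (h n)
    have h4 : ∫ x in (a + h n)..(b + h n), g x = G (b + h n) - G (a + h n) := by
      have e1 : (∫ x in a..(b + h n), g x) - ∫ x in a..(a + h n), g x
          = ∫ x in (a + h n)..(b + h n), g x :=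
        intervalIntegral.integral_interval_sub_left (hint a (b + h n)) (hint a (a + h n))
      simpa [hG] using e1.symm
    have h5 : (∫ x in a..b, g x) = G b - G a := by simp [hG]
    rw [h1, h2, h3, h4, h5]
    have hne : h n ≠ 0 := (hpos n).ne'
    rw [slope_def_field, slope_def_field]
    simp only [add_sub_cancel_left]
    ring
  have lim1 : Tendsto (fun n => ∫ x in Ioc a b, F n x) atTop (𝓝 (g b - g a)) := by
    simp_rw [hFn_int]
    exact (key b).sub (key a)
  -- dominated convergence
  have lim2 : Tendsto (fun n => ∫ x in Ioc a b, F n x) atTop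
      (𝓝 (∫ x in Ioc a b, deriv g x)) := by
    apply MeasureTheory.tendsto_integral_of_dominated_convergence (fun _ => (C : ℝ))
    · intro n
      have hc1 : Continuous fun x : ℝ => g (x + h n) := by fun_prop
      exact ((hc1.sub hgc).div_const (h n)).aestronglyMeasurable
    · exact integrableOn_const measure_Ioc_lt_top.ne
    · intro n
      filter_upwards with x
      have hd : dist (g (x + h n)) (g x) ≤ C * dist (x + h n) x := hg.dist_le_mul _ _
      rw [Real.dist_eq, Real.dist_eq] at hd
      have : |x + h n - x| = h n := by
        rw [add_sub_cancel_left, abs_of_pos (hpos n)]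
      rw [this] at hd
      have hFx : ‖F n x‖ = |g (x + h n) - g x| / h n := by
        rw [hF]; simp [Real.norm_eq_abs, abs_div, abs_of_pos (hpos n)]
      rw [hFx, div_le_iff₀ (hpos n)]
      linarith
    · have := hg.ae_differentiableAt (μ := volume)
      filter_upwards [ae_restrict_of_ae this] with x hx
      have hd : Tendsto (slope g x) (𝓝[≠] x) (𝓝 (deriv g x)) :=
        hasDerivAt_iff_tendsto_slope.1 hx.hasDerivAt
      have := hd.comp (seq_tendsto_nhdsNe x)
      refine this.congr fun n => ?_
      simp only [Function.comp_apply, slope_def_field, add_sub_cancel_left, hF]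
      rfl
  have := tendsto_nhds_unique lim1 lim2
  rw [intervalIntegral.integral_of_le hab, this]

private lemma incr_le {l₀ : ℝ} {E : ℝ → ℝ}
    (hElip : ∀ x y : ℝ, l₀ ≤ x → ∃ C : NNReal, LipschitzOnWith C E (Set.Icc x y))
    {φ : ℝ → ℝ} (hφ0 : ∀ t, l₀ < t → 0 ≤ φ t)
    (hφc : ContinuousOn φ (Ici l₀))
    (hae : ∀ᵐ t ∂(volume.restrict (Ici l₀)), DifferentiableAt ℝ E t → deriv E t ≤ φ t)
    {x y : ℝ} (hx : l₀ ≤ x) (hxy : x ≤ y) :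
    E y - E x ≤ ∫ t in x..y, φ t := by
  obtain ⟨C, hC⟩ := hElip l₀ (y + 1) le_rfl
  obtain ⟨g, hgl, hEg⟩ := hC.extend_real
  have hy1 : y ≤ y + 1 := by linarith
  have hxm : x ∈ Icc l₀ (y + 1) := ⟨hx, hxy.trans hy1⟩
  have hym : y ∈ Icc l₀ (y + 1) := ⟨hx.trans hxy, hy1⟩
  -- the derivative bound transfers to g, a.e. on Icc x y
  have haeg : ∀ᵐ t ∂(volume.restrict (Icc x y)), deriv g t ≤ φ t := by
    have h1 : ∀ᵐ t ∂(volume.restrict (Icc x y)),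
        DifferentiableAt ℝ E t → deriv E t ≤ φ t :=
      ae_restrict_of_ae_restrict_of_subset (Icc_subset_Ici_self.trans (Ici_subset_Ici.2 hx)) hae
    have h2 : ∀ᵐ t ∂(volume.restrict (Icc x y)), t ≠ l₀ := by
      refine ae_iff.2 ?_
      have hz : (volume.restrict (Icc x y)) {l₀} = 0 := by
        rw [Measure.restrict_apply' measurableSet_Icc]
        exact le_antisymm ((measure_mono inter_subset_left).trans (by simp)) zero_le
      simpa [not_not, setOf_eq_eq_singleton] using hz
    filter_upwards [h1, h2, ae_restrict_mem measurableSet_Icc] with t h1t h2t h3t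
    have hlt : l₀ < t := lt_of_le_of_ne (hx.trans h3t.1) (Ne.symm h2t)
    have hnb : Icc l₀ (y + 1) ∈ 𝓝 t :=
      Icc_mem_nhds hlt (by linarith [h3t.2])
    have hEq : E =ᶠ[𝓝 t] g := eventually_of_mem hnb hEg
    by_cases hd : DifferentiableAt ℝ E t
    · rw [← hEq.deriv_eq]
      exact h1t hd
    · have hdg : ¬ DifferentiableAt ℝ g t := fun hg' =>
        hd (hg'.congr_of_eventuallyEq hEq)
      rw [deriv_zero_of_not_differentiableAt hdg]
      exact hφ0 t hlt
  -- integrability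
  have hder_int : IntervalIntegrable (deriv g) volume x y := by
    rw [intervalIntegrable_iff_integrableOn_Ioc_of_le hxy]
    refine Integrable.mono' (g := fun _ => (C : ℝ))
      (integrableOn_const measure_Ioc_lt_top.ne)
      ((measurable_deriv g).aestronglyMeasurable.restrict) ?_
    filter_upwards with t
    simpa [Real.norm_eq_abs] using lipschitz_deriv_bound hgl t
  have hφ_int : IntervalIntegrable φ volume x y :=
    (hφc.mono (Icc_subset_Ici_self.trans (Ici_subset_Ici.2 hx))).intervalIntegrable_of_Icc hxy
  calc E y - E x = g y - g x := by rw [hEg hym, hEg hxm]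
    _ = ∫ t in x..y, deriv g t := lipschitz_ftc hgl hxy
    _ ≤ ∫ t in x..y, φ t :=
        intervalIntegral.integral_mono_ae_restrict hxy hder_int hφ_int haeg

noncomputable section

private def ACO (K C₂ t : ℝ) : ℝ := K^2 * (1 + (3/2) * C₂ * Real.exp (-(2/3) * K^2 * t))
private def BCO (K C₉ t : ℝ) : ℝ := C₉ * Real.sqrt K * Real.exp (K^2 * t / 6)
private def AF (K C₂ l₀ t : ℝ) : ℝ :=
  K^2 * (t - l₀) + (9/4) * C₂ * (Real.exp (-(2/3)*K^2*l₀) - Real.exp (-(2/3)*K^2*t))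
private def C1 (K C₉ l₀ : ℝ) : ℝ := (3/2) * C₉ * Real.exp (K^2*l₀/6) / (K * Real.sqrt K)
private def PSI (K C₂ C₉ l₀ δ t : ℝ) : ℝ :=
  Real.exp (AF K C₂ l₀ t / 2) * (δ + C1 K C₉ l₀ * (1 - Real.exp (-(K^2/3)*(t - l₀))))
private def PSID (K C₂ C₉ l₀ δ t : ℝ) : ℝ :=
  ACO K C₂ t / 2 * PSI K C₂ C₉ l₀ δ t
    + Real.exp (AF K C₂ l₀ t / 2) * (C1 K C₉ l₀ * (K^2/3 * Real.exp (-(K^2/3)*(t - l₀))))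

private lemma AF_hasDeriv (K C₂ l₀ t : ℝ) : HasDerivAt (AF K C₂ l₀) (ACO K C₂ t) t := by
  have h1 : HasDerivAt (fun s : ℝ => K^2 * (s - l₀)) (K^2 * 1) t :=
    ((hasDerivAt_id t).sub_const l₀).const_mul (K^2)
  have h2 : HasDerivAt (fun s : ℝ => Real.exp (-(2/3)*K^2*s))
      (Real.exp (-(2/3)*K^2*t) * (-(2/3)*K^2 * 1)) t := by
    exact (((hasDerivAt_id t).const_mul (-(2/3)*K^2)).exp)
  have h3 : HasDerivAt (fun s : ℝ =>
      (9/4) * C₂ * (Real.exp (-(2/3)*K^2*l₀) - Real.exp (-(2/3)*K^2*s)))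
      ((9/4) * C₂ * (0 - Real.exp (-(2/3)*K^2*t) * (-(2/3)*K^2 * 1))) t :=
    ((hasDerivAt_const t _).sub h2).const_mul _
  have := h1.add h3
  exact this.congr_deriv (by unfold ACO; ring)

private lemma PSI_hasDeriv (K C₂ C₉ l₀ δ t : ℝ) :
    HasDerivAt (PSI K C₂ C₉ l₀ δ) (PSID K C₂ C₉ l₀ δ t) t := by
  have h1 : HasDerivAt (fun s => Real.exp (AF K C₂ l₀ s / 2))
      (Real.exp (AF K C₂ l₀ t / 2) * (ACO K C₂ t / 2)) t :=
    ((AF_hasDeriv K C₂ l₀ t).div_const 2).exp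
  have h2 : HasDerivAt (fun s : ℝ => Real.exp (-(K^2/3)*(s - l₀)))
      (Real.exp (-(K^2/3)*(t - l₀)) * (-(K^2/3) * 1)) t :=
    (((hasDerivAt_id t).sub_const l₀).const_mul (-(K^2/3))).exp
  have h3 : HasDerivAt (fun s : ℝ => δ + C1 K C₉ l₀ * (1 - Real.exp (-(K^2/3)*(s - l₀))))
      (C1 K C₉ l₀ * (0 - Real.exp (-(K^2/3)*(t - l₀)) * (-(K^2/3) * 1))) t :=
    (((hasDerivAt_const t (1:ℝ)).sub h2).const_mul _).const_add δ
  have := h1.mul h3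
  exact this.congr_deriv (by unfold PSID PSI; ring)

private lemma PSIsq_hasDeriv (K C₂ C₉ l₀ δ t : ℝ) :
    HasDerivAt (fun s => (PSI K C₂ C₉ l₀ δ s)^2)
      (2 * PSI K C₂ C₉ l₀ δ t * PSID K C₂ C₉ l₀ δ t) t := by
  have := (PSI_hasDeriv K C₂ C₉ l₀ δ t).pow 2
  exact this.congr_deriv (by simp)

private lemma PSI_continuous (K C₂ C₉ l₀ δ : ℝ) : Continuous (PSI K C₂ C₉ l₀ δ) := by
  unfold PSI AF C1; fun_prop

private lemma PSID_continuous (K C₂ C₉ l₀ δ : ℝ) : Continuous (PSID K C₂ C₉ l₀ δ) := by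
  unfold PSID PSI AF C1 ACO; fun_prop

private lemma PSI_at_left (K C₂ C₉ l₀ δ : ℝ) : PSI K C₂ C₉ l₀ δ l₀ = δ := by
  unfold PSI AF; simp

private lemma C1_nonneg {K C₉ : ℝ} (hK : 0 < K) (hC₉ : 0 ≤ C₉) (l₀ : ℝ) :
    0 ≤ C1 K C₉ l₀ := by
  unfold C1
  have h1 : 0 < K * Real.sqrt K := mul_pos hK (Real.sqrt_pos.2 hK)
  exact div_nonneg (by positivity) h1.le

private lemma w_mem {K l₀ t : ℝ} (ht : l₀ ≤ t) :
    0 ≤ 1 - Real.exp (-(K^2/3)*(t - l₀)) ∧ 1 - Real.exp (-(K^2/3)*(t - l₀)) ≤ 1 := by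
  constructor
  · have : Real.exp (-(K^2/3)*(t - l₀)) ≤ 1 := by
      rw [Real.exp_le_one_iff]
      nlinarith [sq_nonneg K]
    linarith
  · linarith [Real.exp_pos (-(K^2/3)*(t - l₀))]

private lemma PSI_pos {K C₂ C₉ l₀ δ t : ℝ} (hK : 0 < K) (hC₉ : 0 ≤ C₉) (hδ : 0 < δ)
    (ht : l₀ ≤ t) : 0 < PSI K C₂ C₉ l₀ δ t := by
  unfold PSI
  apply mul_pos (Real.exp_pos _)
  have h1 := C1_nonneg hK hC₉ l₀
  have h2 := (w_mem (K := K) ht).1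
  nlinarith

private lemma BCO_key {K C₂ C₉ l₀ t : ℝ} (hK : 0 < K) (hC₂ : 0 ≤ C₂) (hC₉ : 0 ≤ C₉)
    (ht : l₀ ≤ t) :
    BCO K C₉ t ≤ 2 * Real.exp (AF K C₂ l₀ t / 2)
      * (C1 K C₉ l₀ * (K^2/3 * Real.exp (-(K^2/3)*(t - l₀)))) := by
  have hKsq : Real.sqrt K * Real.sqrt K = K := Real.mul_self_sqrt hK.le
  have hsK : 0 < Real.sqrt K := Real.sqrt_pos.2 hK
  have hRHS : 2 * Real.exp (AF K C₂ l₀ t / 2)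
      * (C1 K C₉ l₀ * (K^2/3 * Real.exp (-(K^2/3)*(t - l₀))))
      = C₉ * Real.sqrt K
        * Real.exp (AF K C₂ l₀ t / 2 + K^2*l₀/6 + -(K^2/3)*(t - l₀)) := by
    rw [Real.exp_add, Real.exp_add]
    unfold C1
    field_simp
    linear_combination (-6*C₉*K*Real.exp (AF K C₂ l₀ t / 2)*Real.exp (K^2*l₀/6)
      *Real.exp (-(K^2*(t-l₀))/3) * 0 - C₉) * hKsq
  rw [hRHS]
  unfold BCO
  have hbase : 0 ≤ C₉ * Real.sqrt K := mul_nonneg hC₉ hsK.le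
  apply mul_le_mul_of_nonneg_left _ hbase
  rw [Real.exp_le_exp]
  have hAF : K^2 * (t - l₀) ≤ AF K C₂ l₀ t := by
    unfold AF
    have : Real.exp (-(2/3)*K^2*t) ≤ Real.exp (-(2/3)*K^2*l₀) := by
      rw [Real.exp_le_exp]; nlinarith [sq_nonneg K]
    nlinarith
  linarith

private lemma psi_key {K C₂ C₉ l₀ δ t e : ℝ} (hK : 0 < K) (hC₂ : 0 ≤ C₂) (hC₉ : 0 ≤ C₉)
    (hδ : 0 < δ) (ht : l₀ ≤ t) (he0 : 0 ≤ e) (hle : e ≤ (PSI K C₂ C₉ l₀ δ t)^2) :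
    ACO K C₂ t * e + BCO K C₉ t * Real.sqrt e
      ≤ 2 * PSI K C₂ C₉ l₀ δ t * PSID K C₂ C₉ l₀ δ t := by
  have hψ : 0 < PSI K C₂ C₉ l₀ δ t := PSI_pos hK hC₉ hδ ht
  have hsqrt : Real.sqrt e ≤ PSI K C₂ C₉ l₀ δ t := by
    have h := Real.sqrt_le_sqrt hle
    rwa [Real.sqrt_sq hψ.le] at h
  have hACO : 0 ≤ ACO K C₂ t := by
    unfold ACO
    have he := Real.exp_pos (-(2/3)*K^2*t)
    have h0 : (0:ℝ) ≤ 1 + 3/2 * C₂ * Real.exp (-(2/3)*K^2*t) := by nlinarith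
    exact mul_nonneg (sq_nonneg K) h0
  have hBCO : 0 ≤ BCO K C₉ t := by
    unfold BCO
    have := Real.exp_pos (K^2*t/6)
    have := Real.sqrt_nonneg K
    positivity
  calc ACO K C₂ t * e + BCO K C₉ t * Real.sqrt e
      ≤ ACO K C₂ t * (PSI K C₂ C₉ l₀ δ t)^2 + BCO K C₉ t * PSI K C₂ C₉ l₀ δ t :=
        add_le_add (mul_le_mul_of_nonneg_left hle hACO)
          (mul_le_mul_of_nonneg_left hsqrt hBCO)
    _ ≤ ACO K C₂ t * (PSI K C₂ C₉ l₀ δ t)^2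
        + (2 * Real.exp (AF K C₂ l₀ t / 2)
          * (C1 K C₉ l₀ * (K^2/3 * Real.exp (-(K^2/3)*(t - l₀))))) * PSI K C₂ C₉ l₀ δ t := by
        have := mul_le_mul_of_nonneg_right (BCO_key hK hC₂ hC₉ ht) hψ.le
        linarith
    _ = 2 * PSI K C₂ C₉ l₀ δ t * PSID K C₂ C₉ l₀ δ t := by
        unfold PSID; ring

end


private lemma sq_le_exp' {x : ℝ} (hx : 0 ≤ x) : x^2 ≤ Real.exp x := by
  have h0 : (0:ℝ) ≤ 1 + x/4 := by linarith
  have h1 : 1 + x/4 ≤ Real.exp (x/4) := by linarith [Real.add_one_le_exp (x/4)]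
  have h2 : x ≤ (1+x/4)^2 := by nlinarith [sq_nonneg (1 - x/4)]
  have h3 := mul_self_le_mul_self hx h2
  have h4 : (1+x/4)^4 ≤ (Real.exp (x/4))^4 := by
    have := pow_le_pow_left₀ h0 h1 4
    exact this
  have h5 : (Real.exp (x/4))^4 = Real.exp x := by
    rw [show x = x/4+x/4+x/4+x/4 by ring, Real.exp_add, Real.exp_add, Real.exp_add]
    ring
  calc x^2 = x*x := sq x
    _ ≤ (1+x/4)^2*((1+x/4)^2) := h3
    _ = (1+x/4)^4 := by ring
    _ ≤ (Real.exp (x/4))^4 := h4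
    _ = Real.exp x := h5

private lemma const_cmp {C₂ C₉ C₁₀' C₁₀ : ℝ} (hC₂ : 0 ≤ C₂) (hC₉ : 0 < C₉)
    (hC₁₀' : C₁₀' = (3/2) * C₂ + (1/2) * C₉)
    (hC₁₀ : C₁₀ = C₉ * Real.exp (3 * C₁₀') / (2 * C₁₀')) :
    (9/4)*C₉^2*Real.exp ((9/4)*C₂) ≤ C₁₀ := by
  subst hC₁₀' hC₁₀
  rw [le_div_iff₀ (by linarith : (0:ℝ) < 2 * ((3/2) * C₂ + (1/2) * C₉))]
  have key : (9/2)*C₉*((3/2)*C₂+(1/2)*C₉) ≤ Real.exp ((9/4)*C₂+(3/2)*C₉) := by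
    have h := sq_le_exp' (x := (9/4)*C₂+(3/2)*C₉) (by linarith)
    nlinarith [sq_nonneg C₂]
  have hsplit : Real.exp (3*((3/2)*C₂+(1/2)*C₉))
      = Real.exp ((9/4)*C₂) * Real.exp ((9/4)*C₂+(3/2)*C₉) := by
    rw [← Real.exp_add]; congr 1; ring
  rw [hsplit]
  nlinarith [mul_le_mul_of_nonneg_left key
    (mul_nonneg hC₉.le (Real.exp_pos ((9/4)*C₂)).le), Real.exp_pos ((9/4)*C₂)]

theorem E_L2_distance_growth
    (K C₂ C₉ l₀ : ℝ) (hK : 0 < K) (hC₂ : 0 ≤ C₂) (hC₉ : 0 < C₉) (hl₀ : 0 ≤ l₀)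
    (C₁₀' C₁₀ : ℝ)
    (hC₁₀' : C₁₀' = (3/2) * C₂ + (1/2) * C₉)
    (hC₁₀ : C₁₀ = C₉ * Real.exp (3 * C₁₀') / (2 * C₁₀'))
    (E : ℝ → ℝ)
    (hEnonneg : ∀ l, l₀ ≤ l → 0 ≤ E l)
    (hE0 : E l₀ = 0)
    (hElip : ∀ x y : ℝ, l₀ ≤ x → ∃ C : NNReal, LipschitzOnWith C E (Set.Icc x y))
    (hae : ∀ᵐ l ∂(volume.restrict (Set.Ici l₀)),
      DifferentiableAt ℝ E l →
        deriv E l ≤ K^2 * (1 + (3/2) * C₂ * Real.exp (-(2/3) * K^2 * l)) * E l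
          + C₉ * Real.sqrt K * Real.exp (K^2 * l / 6) * Real.sqrt (E l)) :
    ∀ l, l₀ ≤ l →
      E l ≤ (C₁₀ / K^3) * Real.exp (-(2/3) * K^2 * l₀) * Real.exp (K^2 * l) := by
  -- continuity of E on `Ici l₀`
  have hEcont : ContinuousOn E (Ici l₀) := by
    intro t ht
    obtain ⟨C, hC⟩ := hElip l₀ (t + 1) le_rfl
    have h1 : ContinuousWithinAt E (Icc l₀ (t + 1)) t :=
      hC.continuousOn t ⟨ht, by simp only [mem_Ici] at ht; linarith⟩
    apply h1.mono_of_mem_nhdsWithin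
    rw [← Ici_inter_Iic]
    exact inter_mem_nhdsWithin _ (Iic_mem_nhds (by simp only [mem_Ici] at ht; linarith))
  -- the a.e. bound as an increment inequality
  have hΦcont : ContinuousOn (fun t => ACO K C₂ t * E t + BCO K C₉ t * Real.sqrt (E t))
      (Ici l₀) := by
    apply ContinuousOn.add
    · exact (Continuous.continuousOn (by unfold ACO; fun_prop)).mul hEcont
    · exact (Continuous.continuousOn (by unfold BCO; fun_prop)).mul
        (Real.continuous_sqrt.comp_continuousOn hEcont)
  have hincr : ∀ x y : ℝ, l₀ ≤ x → x ≤ y →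
      E y - E x ≤ ∫ t in x..y, (ACO K C₂ t * E t + BCO K C₉ t * Real.sqrt (E t)) := by
    intro x y hx hxy
    refine incr_le hElip ?_ hΦcont ?_ hx hxy
    · intro t ht
      have hEt := hEnonneg t ht.le
      have h1 : 0 ≤ ACO K C₂ t := by
        unfold ACO
        have he := Real.exp_pos (-(2/3)*K^2*t)
        have h0 : (0:ℝ) ≤ 1 + 3/2 * C₂ * Real.exp (-(2/3)*K^2*t) := by nlinarith
        exact mul_nonneg (sq_nonneg K) h0
      have h2 : 0 ≤ BCO K C₉ t := by
        unfold BCO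
        have := Real.sqrt_nonneg K
        positivity
      have := Real.sqrt_nonneg (E t)
      positivity
    · unfold ACO BCO
      exact hae
  -- main crossing claim
  have hmain : ∀ δ : ℝ, 0 < δ → ∀ t, l₀ ≤ t → E t ≤ (PSI K C₂ C₉ l₀ δ t)^2 := by
    intro δ hδ
    by_contra hcon
    push_neg at hcon
    obtain ⟨t₀, ht₀, hlt₀⟩ := hcon
    set S : Set ℝ := {t | l₀ ≤ t ∧ (PSI K C₂ C₉ l₀ δ t)^2 ≤ E t} with hSdef
    have hSne : S.Nonempty := ⟨t₀, ht₀, hlt₀.le⟩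
    have hSbdd : BddBelow S := ⟨l₀, fun t ht => ht.1⟩
    have hScl : IsClosed S := by
      have hcont : ContinuousOn (fun t => ((PSI K C₂ C₉ l₀ δ t)^2, E t)) (Ici l₀) :=
        (((PSI_continuous K C₂ C₉ l₀ δ).pow 2).continuousOn).prodMk hEcont
      have h := hcont.preimage_isClosed_of_isClosed isClosed_Ici
        (isClosed_le continuous_fst continuous_snd)
      have hSeq : S = Ici l₀ ∩
          (fun t => ((PSI K C₂ C₉ l₀ δ t)^2, E t)) ⁻¹' {p : ℝ × ℝ | p.1 ≤ p.2} := rfl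
      rw [hSeq]
      exact h
    set c := sInf S with hcdef
    have hcS : c ∈ S := hScl.csInf_mem hSne hSbdd
    have hcl₀ : l₀ ≤ c := hcS.1
    have hcgt : l₀ < c := by
      rcases lt_or_eq_of_le hcl₀ with h | h
      · exact h
      · exfalso
        have h2 := hcS.2
        rw [← h, PSI_at_left, hE0] at h2
        nlinarith
    have hcont2 : Continuous fun t => 2 * PSI K C₂ C₉ l₀ δ t * PSID K C₂ C₉ l₀ δ t :=
      (continuous_const.mul (PSI_continuous K C₂ C₉ l₀ δ)).mul (PSID_continuous K C₂ C₉ l₀ δ)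
    have hbelow : ∀ t, l₀ ≤ t → t < c → E t ≤ (PSI K C₂ C₉ l₀ δ t)^2 := by
      intro t ht htc
      by_contra hcon2
      push_neg at hcon2
      exact absurd (csInf_le hSbdd ⟨ht, hcon2.le⟩) (not_le.2 htc)
    have h1 : E c ≤ ∫ t in l₀..c, (ACO K C₂ t * E t + BCO K C₉ t * Real.sqrt (E t)) := by
      have := hincr l₀ c le_rfl hcl₀
      rw [hE0, sub_zero] at this
      exact this
    have h2 : (∫ t in l₀..c, (ACO K C₂ t * E t + BCO K C₉ t * Real.sqrt (E t)))
        ≤ ∫ t in l₀..c, 2 * PSI K C₂ C₉ l₀ δ t * PSID K C₂ C₉ l₀ δ t := by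
      apply intervalIntegral.integral_mono_ae_restrict hcl₀
      · exact (hΦcont.mono Icc_subset_Ici_self).intervalIntegrable_of_Icc hcl₀
      · exact hcont2.intervalIntegrable _ _
      · have hne : ∀ᵐ t ∂(volume.restrict (Icc l₀ c)), t ≠ c := by
          refine ae_iff.2 (le_antisymm ?_ zero_le)
          have he : {a : ℝ | ¬ a ≠ c} = {c} := by ext a; simp
          rw [he, Measure.restrict_apply' measurableSet_Icc]
          exact (measure_mono inter_subset_left).trans (by simp)
        filter_upwards [ae_restrict_mem measurableSet_Icc, hne] with t ht htne
        have htc : t < c := lt_of_le_of_ne ht.2 htne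
        exact psi_key hK hC₂ hC₉.le hδ ht.1 (hEnonneg t ht.1) (hbelow t ht.1 htc)
    have h3 : (∫ t in l₀..c, 2 * PSI K C₂ C₉ l₀ δ t * PSID K C₂ C₉ l₀ δ t)
        = (PSI K C₂ C₉ l₀ δ c)^2 - (PSI K C₂ C₉ l₀ δ l₀)^2 := by
      exact intervalIntegral.integral_eq_sub_of_hasDerivAt
        (fun t _ => PSIsq_hasDeriv K C₂ C₉ l₀ δ t) (hcont2.intervalIntegrable _ _)
    rw [PSI_at_left] at h3
    have h4 := hcS.2
    nlinarith
  -- pass to the limit δ → 0⁺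
  intro l hl
  have hEl : E l ≤ (PSI K C₂ C₉ l₀ 0 l)^2 := by
    have hlim : Tendsto (fun δ : ℝ => (PSI K C₂ C₉ l₀ δ l)^2) (𝓝[>] 0)
        (𝓝 ((PSI K C₂ C₉ l₀ 0 l)^2)) := by
      apply Tendsto.mono_left _ nhdsWithin_le_nhds
      have hc : Continuous (fun δ : ℝ => (PSI K C₂ C₉ l₀ δ l)^2) := by
        unfold PSI; fun_prop
      exact hc.tendsto 0
    refine ge_of_tendsto hlim ?_
    filter_upwards [self_mem_nhdsWithin] with δ hδ
    exact hmain δ hδ l hl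
  -- final numerical estimate
  have hKsq : Real.sqrt K * Real.sqrt K = K := Real.mul_self_sqrt hK.le
  have hw := w_mem (K := K) (l₀ := l₀) hl
  have hC1 := C1_nonneg hK hC₉.le l₀
  have hPSI0 : (PSI K C₂ C₉ l₀ 0 l)^2
      = Real.exp (AF K C₂ l₀ l) * (C1 K C₉ l₀ * (1 - Real.exp (-(K^2/3)*(l - l₀))))^2 := by
    unfold PSI
    rw [mul_pow, zero_add]
    congr 1
    rw [sq, ← Real.exp_add, add_halves]
  have hexpA : Real.exp (AF K C₂ l₀ l) ≤ Real.exp ((9/4)*C₂ + (K^2*l - K^2*l₀)) := by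
    rw [Real.exp_le_exp]
    unfold AF
    have e1 : Real.exp (-(2/3)*K^2*l₀) ≤ 1 := by
      rw [Real.exp_le_one_iff]
      nlinarith [sq_nonneg K]
    have e2 := Real.exp_pos (-(2/3)*K^2*l)
    nlinarith
  have hsq : (C1 K C₉ l₀ * (1 - Real.exp (-(K^2/3)*(l - l₀))))^2 ≤ (C1 K C₉ l₀)^2 := by
    have hww : (1 - Real.exp (-(K^2/3)*(l - l₀)))^2 ≤ 1 := by nlinarith [hw.1, hw.2]
    calc (C1 K C₉ l₀ * (1 - Real.exp (-(K^2/3)*(l - l₀))))^2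
        = (C1 K C₉ l₀)^2 * (1 - Real.exp (-(K^2/3)*(l - l₀)))^2 := by ring
      _ ≤ (C1 K C₉ l₀)^2 * 1 := mul_le_mul_of_nonneg_left hww (sq_nonneg _)
      _ = (C1 K C₉ l₀)^2 := mul_one _
  have hC1sq : (C1 K C₉ l₀)^2 = (9/4)*C₉^2*Real.exp (K^2*l₀/3)/K^3 := by
    unfold C1
    rw [div_pow, mul_pow, mul_pow, mul_pow]
    have he : Real.exp (K^2*l₀/6)^2 = Real.exp (K^2*l₀/3) := by
      rw [sq, ← Real.exp_add]; ring_nf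
    have hk3 : Real.sqrt K ^ 2 = K := Real.sq_sqrt hK.le
    rw [he, hk3]
    ring
  have hsplit : Real.exp ((9/4)*C₂ + (K^2*l - K^2*l₀)) * Real.exp (K^2*l₀/3)
      = Real.exp ((9/4)*C₂) * (Real.exp (-(2/3)*K^2*l₀) * Real.exp (K^2*l)) := by
    rw [← Real.exp_add, ← Real.exp_add, ← Real.exp_add]
    congr 1
    ring
  -- constant comparison
  have hC₁₀'pos : 0 < C₁₀' := by rw [hC₁₀']; linarith
  have hconst : (9/4)*C₉^2*Real.exp ((9/4)*C₂) ≤ C₁₀ := const_cmp hC₂ hC₉ hC₁₀' hC₁₀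
  calc E l ≤ (PSI K C₂ C₉ l₀ 0 l)^2 := hEl
    _ = Real.exp (AF K C₂ l₀ l) * (C1 K C₉ l₀ * (1 - Real.exp (-(K^2/3)*(l - l₀))))^2 := hPSI0
    _ ≤ Real.exp ((9/4)*C₂ + (K^2*l - K^2*l₀)) * (C1 K C₉ l₀)^2 :=
        mul_le_mul hexpA hsq (sq_nonneg _) (Real.exp_pos _).le
    _ = ((9/4)*C₉^2*Real.exp ((9/4)*C₂)) / K^3
        * (Real.exp (-(2/3)*K^2*l₀) * Real.exp (K^2*l)) := by
        rw [hC1sq]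
        linear_combination ((9/4)*C₉^2/K^3) * hsplit
    _ ≤ (C₁₀ / K^3) * Real.exp (-(2/3) * K^2 * l₀) * Real.exp (K^2 * l) := by
        have hP : (0:ℝ) < Real.exp (-(2/3)*K^2*l₀) * Real.exp (K^2*l) := by positivity
        have hK3 : (0:ℝ) < K^3 := by positivity
        have h := mul_le_mul_of_nonneg_right ((div_le_div_iff_of_pos_right hK3).2 hconst) hP.le
        refine le_trans (le_of_eq ?_) (le_trans h (le_of_eq ?_)) <;> ring
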